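/- If P is a uniquely generated finite poset, then for every element v, the subgraph of the cover graph of P induced on the down-set T(v) = {u : u ≤ v} is connected and acyclic (a tree). -/

import Mathlib

/-- The cover graph of a poset: `x` and `y` adjacent iff one covers the other. -/
def coverGraph (α : Type*) [PartialOrder α] : SimpleGraph α :=
  SimpleGraph.fromRel (· ⋖ ·)

/-- A poset is uniquely generated if every comparable pair `x < y` is connected
by a unique covering chain. -/
def UniquelyGenerated (α : Type*) [PartialOrder α] : Prop :=
  ∀ x y : α, x < y →
    ∃! l : List α, List.Chain (· ⋖ ·) x l ∧ l.getLast? = some y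

section Aux

variable {α : Type*} [PartialOrder α]

private lemma aux_exists_covBy_le [Fintype α] {x y : α} (h : x < y) : ∃ z, x ⋖ z ∧ z ≤ y := by
  classical
  obtain ⟨z, hz, hmin⟩ :=
    (Finset.univ.filter fun z => x < z ∧ z ≤ y).exists_minimal ⟨y, by simp [h]⟩
  simp only [Finset.mem_filter, Finset.mem_univ, true_and] at hz hmin
  refine ⟨z, ⟨hz.1, fun w hxw hwz => ?_⟩, hz.2⟩
  exact lt_irrefl _ (hwz.trans_le (hmin ⟨hxw, hwz.le.trans hz.2⟩ hwz.le))

private lemma aux_exists_le_covBy [Fintype α] {x y : α} (h : x < y) : ∃ z, x ≤ z ∧ z ⋖ y := by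
  classical
  obtain ⟨z, hz, hmax⟩ :=
    (Finset.univ.filter fun z => x ≤ z ∧ z < y).exists_maximal ⟨x, by simp [h, le_refl]⟩
  simp only [Finset.mem_filter, Finset.mem_univ, true_and] at hz hmax
  refine ⟨z, hz.1, ⟨hz.2, fun w hzw hwy => ?_⟩⟩
  exact lt_irrefl _ (hzw.trans_le (hmax ⟨hz.1.trans hzw.le, hwy⟩ hzw.le))

private lemma aux_chain_snoc {R : α → α → Prop} :
    ∀ (l : List α) (x z y : α), List.Chain R x l → l.getLast? = some z → R z y →
      List.Chain R x (l ++ [y])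
  | [], x, z, y => by simp
  | a :: l, x, z, y => by
    intro hc hlast hzy
    rcases List.chain_cons.mp hc with ⟨hxa, hc'⟩
    rcases l with _ | ⟨b, l⟩
    · simp only [List.getLast?_singleton, Option.some.injEq] at hlast
      subst hlast
      exact List.chain_cons.mpr ⟨hxa, List.chain_cons.mpr ⟨hzy, List.Chain.nil⟩⟩
    · rw [List.getLast?_cons_cons] at hlast
      exact List.chain_cons.mpr ⟨hxa, aux_chain_snoc (b :: l) a z y hc' hlast hzy⟩

private lemma aux_exists_chain [Fintype α] (y : α) : ∀ x : α, x < y →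
    ∃ l : List α, List.Chain (· ⋖ ·) x l ∧ l.getLast? = some y := by
  induction y using WellFoundedLT.induction with
  | ind y ih =>
    intro x h
    obtain ⟨z, hxz, hzy⟩ := aux_exists_le_covBy h
    rcases eq_or_lt_of_le hxz with rfl | hlt
    · exact ⟨[y], List.chain_cons.mpr ⟨hzy, List.Chain.nil⟩, rfl⟩
    · obtain ⟨l, hl, hlast⟩ := ih z hzy.lt x hlt
      exact ⟨l ++ [y], aux_chain_snoc l x z y hl hlast hzy, by simp⟩

/-- In a uniquely generated poset, an element has at most one upper cover below `v`. -/
private lemma aux_parent_unique [Fintype α] (hug : UniquelyGenerated α) {v a b c : α}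
    (hab : a ⋖ b) (hbv : b ≤ v) (hac : a ⋖ c) (hcv : c ≤ v) : b = c := by
  have build : ∀ w : α, a ⋖ w → w ≤ v →
      ∃ l : List α, (List.Chain (· ⋖ ·) a l ∧ l.getLast? = some v) ∧ l.head? = some w := by
    intro w haw hwv
    rcases eq_or_lt_of_le hwv with rfl | hwv'
    · exact ⟨[w], ⟨List.chain_cons.mpr ⟨haw, List.Chain.nil⟩, rfl⟩, rfl⟩
    · obtain ⟨l, hl, hlast⟩ := aux_exists_chain v w hwv'
      refine ⟨w :: l, ⟨List.chain_cons.mpr ⟨haw, hl⟩, ?_⟩, rfl⟩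
      rcases l with _ | ⟨e, l⟩
      · simp at hlast
      · rwa [List.getLast?_cons_cons]
  obtain ⟨lb, hlb, hheadb⟩ := build b hab hbv
  obtain ⟨lc, hlc, hheadc⟩ := build c hac hcv
  have hav : a < v := lt_of_lt_of_le hab.lt hbv
  obtain ⟨l, -, huniq⟩ := hug a v hav
  have h1 := huniq lb hlb
  have h2 := huniq lc hlc
  have : lb = lc := h1.trans h2.symm
  rw [this, hheadc] at hheadb
  exact (Option.some_inj.mp hheadb).symm

/-- Every element of the down-set is reachable from the top in the induced cover graph. -/
private lemma aux_reach [Fintype α] (v : α) : ∀ (x : α) (hx : x ≤ v),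
    (SimpleGraph.induce {u : α | u ≤ v} (coverGraph α)).Reachable ⟨x, hx⟩ ⟨v, le_refl v⟩ := by
  intro x
  induction x using WellFoundedGT.induction with
  | ind x ih =>
    intro hx
    rcases eq_or_lt_of_le hx with rfl | hlt
    · exact SimpleGraph.Reachable.refl _
    · obtain ⟨z, hxz, hzv⟩ := aux_exists_covBy_le hlt
      have hadj : (SimpleGraph.induce {u : α | u ≤ v} (coverGraph α)).Adj ⟨x, hx⟩ ⟨z, hzv⟩ := by
        show (coverGraph α).Adj x z
        exact (SimpleGraph.fromRel_adj _ _ _).mpr ⟨hxz.ne, Or.inl hxz⟩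
      exact hadj.reachable.trans (ih z hxz.lt hzv)

private lemma aux_loop_path_nil {V : Type*} {G : SimpleGraph V} {a : V} :
    ∀ (r : G.Walk a a), r.support.Nodup → r = SimpleGraph.Walk.nil
  | SimpleGraph.Walk.nil, _ => rfl
  | SimpleGraph.Walk.cons h r, hnd => by
    exfalso
    rw [SimpleGraph.Walk.support_cons, List.nodup_cons] at hnd
    exact hnd.1 r.end_mem_support

end Aux

/-- If `P` is a uniquely generated finite poset, then for every `v` the subgraph
of the cover graph induced on the down-set `T(v) = {u : u ≤ v}` is a tree. -/
theorem stmt2 (α : Type*) [Fintype α] [PartialOrder α]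
    (hug : UniquelyGenerated α) (v : α) :
    (SimpleGraph.induce {u : α | u ≤ v} (coverGraph α)).IsTree := by
  classical
  set G := SimpleGraph.induce {u : α | u ≤ v} (coverGraph α) with hGdef
  have hadj' : ∀ {a b : {u : α | u ≤ v}}, G.Adj a b → ((a : α) ⋖ b ∨ (b : α) ⋖ a) := by
    intro a b h
    have h2 : (coverGraph α).Adj a b := h
    rw [coverGraph, SimpleGraph.fromRel_adj] at h2
    exact h2.2
  constructor
  · -- connected
    have hne : Nonempty {u : α | u ≤ v} := ⟨⟨v, le_refl v⟩⟩
    refine SimpleGraph.Connected.mk fun a b => ?_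
    obtain ⟨x, hx⟩ := a
    obtain ⟨y, hy⟩ := b
    exact (aux_reach v x hx).trans (aux_reach v y hy).symm
  · -- acyclic
    intro w c hc
    have hwmem : w ∈ c.support := c.start_mem_support
    obtain ⟨u, humem, humin⟩ :=
      c.support.toFinset.exists_minimal ⟨w, List.mem_toFinset.mpr hwmem⟩
    replace humem := List.mem_toFinset.mp humem
    have humin' : ∀ x : {u : α | u ≤ v}, x ∈ c.support → ¬ x < u :=
      fun x hx hlt => lt_irrefl _ (hlt.trans_le (humin (List.mem_toFinset.mpr hx) hlt.le))
    have hpc0 : (c.rotate u humem).IsCycle := hc.rotate humem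
    obtain ⟨a, huA, q, hP⟩ := SimpleGraph.Walk.not_nil_iff.mp hpc0.not_nil
    rw [hP] at hpc0
    -- membership transfer
    have hsup : ∀ x : {u : α | u ≤ v}, x ∈ q.support → x ∈ c.support := by
      intro x hx
      have h1 : x ∈ (c.rotate u humem).support.tail := by
        rw [hP, SimpleGraph.Walk.support_cons, List.tail_cons]
        exact hx
      exact List.mem_of_mem_tail
        ((SimpleGraph.Walk.support_rotate c u humem).mem_iff.mp h1)
    -- q.support is nodup
    have hnd : q.support.Nodup := by
      have := hpc0.support_nodup
      rwa [SimpleGraph.Walk.support_cons, List.tail_cons] at this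
    -- q is not nil
    have h3 : 3 ≤ q.length + 1 := by
      have := hpc0.three_le_length
      rwa [SimpleGraph.Walk.length_cons] at this
    have hqnotnil : ¬ q.Nil := by
      rw [SimpleGraph.Walk.nil_iff_length_eq]
      omega
    obtain ⟨a₂, h₂, q₂, hq₂⟩ := SimpleGraph.Walk.not_nil_iff.mp hqnotnil
    obtain ⟨b, r, hbu, hconcat⟩ := SimpleGraph.Walk.exists_cons_eq_concat h₂ q₂
    rw [← hq₂] at hconcat
    -- q = r.concat hbu, r : Walk a b, hbu : G.Adj b u
    have hqsup : q.support = r.support ++ [u] := by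
      rw [hconcat, SimpleGraph.Walk.support_concat]
    have hbq : b ∈ q.support := by
      rw [hqsup]
      exact List.mem_append_left _ r.end_mem_support
    have haq : a ∈ q.support := q.start_mem_support
    -- u covers a
    have hua : (u : α) ⋖ a := by
      rcases hadj' huA with h | h
      · exact h
      · exact absurd (Subtype.coe_lt_coe.mp h.lt) (humin' a (hsup a haq))
    -- u covers b
    have hub : (u : α) ⋖ b := by
      rcases hadj' hbu with h | h
      · exact absurd (Subtype.coe_lt_coe.mp h.lt) (humin' b (hsup b hbq))
      · exact h
    -- a ≠ b
    have hab : a ≠ b := by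
      intro he
      subst he
      have hrnd : r.support.Nodup := (List.nodup_append.mp (hqsup ▸ hnd)).1
      have hrnil := aux_loop_path_nil r hrnd
      subst hrnil
      have : q.length = 1 := by
        rw [hconcat, SimpleGraph.Walk.length_concat, SimpleGraph.Walk.length_nil]
      omega
    exact hab (Subtype.ext (aux_parent_unique hug hua a.2 hub b.2))
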